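/- Let μ_t ∈ [0, √2), η := 2/√(2 + μ_t²), α₀ ∈ [0, 1), λ := α₀ + (1−α₀)η, r > 0, and c := rλ. Then η > 1, λ > 1, and c > 0; moreover, for every σ_v ∈ (σ₀(c), 1], setting μ_v := √(2(1 − σ_v²)), the derivative of the reduced validation loss with respect to α₀ is strictly negative: r(1−η) · E_Z[(S(c(μ_v + σ_v Z)) − 1)(μ_v + σ_v Z)] < 0. -/

import Mathlib

open MeasureTheory ProbabilityTheory

/-- The logistic sigmoid `S(t) = 1/(1 + exp(-t))`. -/
noncomputable def S (t : ℝ) : ℝ := 1 / (1 + Real.exp (-t))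

/-- The standard Gaussian measure on `ℝ`. -/
noncomputable def γ : Measure ℝ := gaussianReal 0 1

/-- The validation mean `μᵥ(s) := √(2(1 - s²))`. -/
noncomputable def μv (s : ℝ) : ℝ := Real.sqrt (2 * (1 - s ^ 2))

/-- `g(c, s) := -E_Z[(S(c(μᵥ(s) + s Z)) - 1)(μᵥ(s) + s Z)]` for a standard Gaussian `Z`. -/
noncomputable def g (c s : ℝ) : ℝ :=
  -∫ z, (S (c * (μv s + s * z)) - 1) * (μv s + s * z) ∂γ

/-- `σ₀(c) := sup { s ∈ [0,1] : g(c, s) ≥ 0 }`. -/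
noncomputable def σ₀ (c : ℝ) : ℝ := sSup {s : ℝ | s ∈ Set.Icc (0 : ℝ) 1 ∧ 0 ≤ g c s}

lemma S_lt_one (t : ℝ) : S t < 1 := by
  unfold S
  rw [div_lt_one (by positivity)]
  linarith [Real.exp_pos (-t)]

lemma g_zero_nonneg (c : ℝ) : 0 ≤ g c 0 := by
  have hμ : μv 0 = Real.sqrt 2 := by simp [μv]
  have hprob : IsProbabilityMeasure γ := by unfold γ; infer_instance
  have : g c 0 = -((S (c * (Real.sqrt 2 + 0)) - 1) * (Real.sqrt 2 + 0)) := by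
    unfold g
    simp only [hμ, zero_mul, add_zero]
    rw [integral_const, probReal_univ]
    simp
  rw [this]
  have h1 : S (c * (Real.sqrt 2 + 0)) - 1 < 0 := by linarith [S_lt_one (c * (Real.sqrt 2 + 0))]
  have h2 : (0:ℝ) < Real.sqrt 2 + 0 := by
    have := Real.sqrt_pos.mpr (by norm_num : (0:ℝ) < 2); linarith
  nlinarith

/-- Let `μₜ ∈ [0, √2)`, `η := 2/√(2 + μₜ²)`, `α₀ ∈ [0, 1)`, `λ := α₀ + (1-α₀)η`, `r > 0`
and `c := rλ`.  Then `η > 1`, `λ > 1` and `c > 0`; moreover for every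
`σᵥ ∈ (σ₀(c), 1]`, with `μᵥ = √(2(1 - σᵥ²))`, the derivative of the reduced validation
loss with respect to `α₀` is strictly negative:
`r(1-η) ⬝ E_Z[(S(c(μᵥ + σᵥ Z)) - 1)(μᵥ + σᵥ Z)] < 0`. -/
theorem stmt16 (μt : ℝ) (hμt : μt ∈ Set.Ico 0 (Real.sqrt 2))
    (η : ℝ) (hη : η = 2 / Real.sqrt (2 + μt ^ 2))
    (α₀ : ℝ) (hα₀ : α₀ ∈ Set.Ico (0 : ℝ) 1)
    (l : ℝ) (hl : l = α₀ + (1 - α₀) * η)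
    (r : ℝ) (hr : 0 < r) (c : ℝ) (hc : c = r * l) :
    1 < η ∧ 1 < l ∧ 0 < c ∧
      ∀ σv ∈ Set.Ioc (σ₀ c) 1,
        r * (1 - η) *
            ∫ z, (S (c * (μv σv + σv * z)) - 1) * (μv σv + σv * z) ∂γ < 0  := by
  obtain ⟨hμt0, hμt2⟩ := hμt
  obtain ⟨hα0, hα1⟩ := hα₀
  have hμsq : μt ^ 2 < 2 := by
    nlinarith [Real.sq_sqrt (by norm_num : (0:ℝ) ≤ 2), Real.sqrt_nonneg 2]
  have hs_pos : 0 < Real.sqrt (2 + μt ^ 2) := Real.sqrt_pos.mpr (by nlinarith)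
  have hs_lt : Real.sqrt (2 + μt ^ 2) < 2 := by
    have : Real.sqrt (2 + μt ^ 2) < Real.sqrt 4 := by
      apply Real.sqrt_lt_sqrt (by nlinarith); nlinarith
    have h4 : Real.sqrt 4 = 2 := by
      rw [show (4:ℝ) = 2^2 by norm_num, Real.sqrt_sq (by norm_num)]
    linarith
  have hη1 : 1 < η := by
    rw [hη, lt_div_iff₀ hs_pos]; linarith
  have hl1 : 1 < l := by rw [hl]; nlinarith
  have hcpos : 0 < c := by rw [hc]; nlinarith
  refine ⟨hη1, hl1, hcpos, ?_⟩
  intro σv hσv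
  obtain ⟨hσl, hσu⟩ := hσv
  set A := {s : ℝ | s ∈ Set.Icc (0 : ℝ) 1 ∧ 0 ≤ g c s} with hA
  have h0A : (0:ℝ) ∈ A := ⟨⟨le_refl 0, by norm_num⟩, g_zero_nonneg c⟩
  have hbdd : BddAbove A := ⟨1, fun x hx => hx.1.2⟩
  have hσ₀0 : 0 ≤ σ₀ c := le_csSup hbdd h0A
  have hσnot : σv ∉ A := fun h => absurd (le_csSup hbdd h) (not_le.mpr hσl)
  have hgneg : g c σv < 0 := by
    by_contra h
    exact hσnot ⟨⟨by linarith, hσu⟩, le_of_not_gt (by simpa using h)⟩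
  have hint : 0 < ∫ z, (S (c * (μv σv + σv * z)) - 1) * (μv σv + σv * z) ∂γ := by
    unfold g at hgneg; linarith
  have : r * (1 - η) < 0 := by nlinarith
  exact mul_neg_of_neg_of_pos this hint
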